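/- Let 0 < p < 1, q = 1 - p, and let B be the infinite nonnegative matrix on S = {1, 2, 3, ...} with B(x, x+1) = p for all x ≥ 1, B(x, x-1) = q for all x ≥ 2, and all other entries 0. Then for every real λ with 0 < λ < 2·√(p·q) and every x ∈ S, the series ∑_{n=0}^{∞} λ^{-n}·B^n(x, x) diverges to infinity. -/

import Mathlib

open Filter

/-- The birth-death matrix on `S = {1, 2, 3, ...}` (embedded in `ℕ`, with row/column `0`
identically zero). -/
noncomputable def bdB (p : ℝ) : ℕ → ℕ → ℝ := fun x y =>
  if 1 ≤ x ∧ y = x + 1 then p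
  else if 2 ≤ x ∧ y + 1 = x then 1 - p
  else 0

/-- Matrix powers: `B^0 = I`, `B^{n+1}(x,y) = ∑_w B^n(x,w) B(w,y)`. -/
noncomputable def matPow {S : Type*} [DecidableEq S] (B : S → S → ℝ) : ℕ → S → S → ℝ
  | 0 => fun x y => if x = y then (1 : ℝ) else 0
  | n + 1 => fun x y => ∑' w, matPow B n x w * B w y


lemma bdB_nonneg (p : ℝ) (hp0 : 0 ≤ p) (hp1 : p ≤ 1) (a b : ℕ) : 0 ≤ bdB p a b := by
  unfold bdB; split_ifs <;> linarith

lemma bdB_eq_zero (p : ℝ) {a b : ℕ} (h1 : a ≠ b + 1) (h2 : b ≠ a + 1) : bdB p a b = 0 := by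
  unfold bdB; split_ifs with g1 g2 <;> first | rfl | omega

/-- Lemma A: two-term right recursion. -/
lemma matPow_succ_eq (p : ℝ) (n x y : ℕ) :
    matPow (bdB p) (n+1) x y =
      matPow (bdB p) n x (y+1) * bdB p (y+1) y
      + matPow (bdB p) n x (y-1) * bdB p (y-1) y := by
  have h : ∀ w ∉ ({y+1, y-1} : Finset ℕ), matPow (bdB p) n x w * bdB p w y = 0 := by
    intro w hw
    simp only [Finset.mem_insert, Finset.mem_singleton, not_or] at hw
    have : bdB p w y = 0 := bdB_eq_zero p (by omega) (by omega)
    simp [this]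
  show (∑' w, matPow (bdB p) n x w * bdB p w y) = _
  rw [tsum_eq_sum h, Finset.sum_pair (by omega : y+1 ≠ y-1)]

lemma matPow_nonneg (p : ℝ) (hp0 : 0 ≤ p) (hp1 : p ≤ 1) :
    ∀ n x y, 0 ≤ matPow (bdB p) n x y := by
  intro n
  induction n with
  | zero => intro x y; simp only [matPow]; split_ifs <;> norm_num
  | succ n ih =>
    intro x y
    rw [matPow_succ_eq]
    have := bdB_nonneg p hp0 hp1 (y+1) y
    have := bdB_nonneg p hp0 hp1 (y-1) y
    have := ih x (y+1)
    have := ih x (y-1)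
    positivity

/-- Lemma B: finite support. -/
lemma matPow_eq_zero (p : ℝ) : ∀ n x y, x + n < y → matPow (bdB p) n x y = 0 := by
  intro n
  induction n with
  | zero => intro x y h; simp only [matPow]; rw [if_neg (by omega)]
  | succ n ih =>
    intro x y h
    rw [matPow_succ_eq, ih x (y+1) (by omega), ih x (y-1) (by omega)]
    ring

lemma matPow_one (p : ℝ) (y x : ℕ) : matPow (bdB p) 1 y x = bdB p y x := by
  rw [matPow_succ_eq]
  simp only [matPow, bdB, and_true, and_false, true_and, false_and, Nat.add_sub_cancel]
  split_ifs <;> first | omega | ring1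

/-- Lemma E: two-term left recursion. -/
lemma matPow_succ_eq' (p : ℝ) : ∀ n y x, matPow (bdB p) (n+1) y x =
    bdB p y (y+1) * matPow (bdB p) n (y+1) x
    + bdB p y (y-1) * matPow (bdB p) n (y-1) x := by
  intro n
  induction n with
  | zero =>
    intro y x
    rw [matPow_one]
    simp only [matPow, bdB, and_true, and_false, true_and, false_and, Nat.add_sub_cancel]
    split_ifs <;> first | omega | ring1
  | succ n ih =>
    intro y x
    rw [matPow_succ_eq, ih y (x+1), ih y (x-1),
      matPow_succ_eq p n (y+1) x, matPow_succ_eq p n (y-1) x]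
    ring

/-- One-step reversibility. -/
lemma bdB_rev (p : ℝ) (hp1 : p < 1) (a b : ℕ) :
    (p/(1-p))^a * bdB p a b = (p/(1-p))^b * bdB p b a := by
  have hq : (1:ℝ) - p ≠ 0 := by linarith
  rcases eq_or_ne b (a+1) with hb | hb
  · subst hb
    rcases Nat.lt_or_ge a 1 with ha | ha
    · have h1 : bdB p a (a+1) = 0 := by unfold bdB; split_ifs <;> first | omega | rfl
      have h2 : bdB p (a+1) a = 0 := by unfold bdB; split_ifs <;> first | omega | rfl
      rw [h1, h2, mul_zero, mul_zero]
    · have h1 : bdB p a (a+1) = p := by unfold bdB; split_ifs <;> first | omega | rfl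
      have h2 : bdB p (a+1) a = 1 - p := by unfold bdB; split_ifs <;> first | omega | rfl
      rw [h1, h2, pow_succ]
      field_simp
  · rcases eq_or_ne a (b+1) with ha | ha
    · subst ha
      rcases Nat.lt_or_ge b 1 with hb1 | hb1
      · have h1 : bdB p (b+1) b = 0 := by unfold bdB; split_ifs <;> first | omega | rfl
        have h2 : bdB p b (b+1) = 0 := by unfold bdB; split_ifs <;> first | omega | rfl
        rw [h1, h2, mul_zero, mul_zero]
      · have h1 : bdB p (b+1) b = 1 - p := by unfold bdB; split_ifs <;> first | omega | rfl
        have h2 : bdB p b (b+1) = p := by unfold bdB; split_ifs <;> first | omega | rfl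
        rw [h1, h2, pow_succ]
        field_simp
    · rw [bdB_eq_zero p ha hb, bdB_eq_zero p (fun h => hb h) (fun h => ha h), mul_zero, mul_zero]

/-- Reversibility of powers. -/
lemma matPow_rev (p : ℝ) (hp1 : p < 1) :
    ∀ n x y, (p/(1-p))^x * matPow (bdB p) n x y = (p/(1-p))^y * matPow (bdB p) n y x := by
  intro n
  induction n with
  | zero =>
    intro x y
    simp only [matPow]
    rcases eq_or_ne x y with h | h
    · subst h; rfl
    · rw [if_neg h, if_neg (Ne.symm h), mul_zero, mul_zero]
  | succ n ih =>
    intro x y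
    rw [matPow_succ_eq, matPow_succ_eq' p n y x]
    have e1 : (p/(1-p))^x * (matPow (bdB p) n x (y+1) * bdB p (y+1) y)
        = ((p/(1-p))^(y+1) * bdB p (y+1) y) * matPow (bdB p) n (y+1) x := by
      rw [mul_comm (matPow (bdB p) n x (y+1)) (bdB p (y+1) y), ← mul_assoc, mul_assoc,
        mul_comm (bdB p (y+1) y), ← mul_assoc, ih x (y+1)]; ring
    have e2 : (p/(1-p))^x * (matPow (bdB p) n x (y-1) * bdB p (y-1) y)
        = ((p/(1-p))^(y-1) * bdB p (y-1) y) * matPow (bdB p) n (y-1) x := by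
      rw [mul_comm (matPow (bdB p) n x (y-1)) (bdB p (y-1) y), ← mul_assoc, mul_assoc,
        mul_comm (bdB p (y-1) y), ← mul_assoc, ih x (y-1)]; ring
    rw [mul_add, e1, e2, bdB_rev p hp1 (y+1) y, bdB_rev p hp1 (y-1) y]
    ring

/-- Chapman–Kolmogorov with explicit finite range. -/
lemma matPow_add (p : ℝ) (m : ℕ) : ∀ n x y, matPow (bdB p) (m + n) x y
    = ∑ w ∈ Finset.range (x + m + 1), matPow (bdB p) m x w * matPow (bdB p) n w y := by
  intro n
  induction n with
  | zero =>
    intro x y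
    simp only [Nat.add_zero, matPow, mul_ite, mul_one, mul_zero]
    rw [Finset.sum_ite_eq' (Finset.range (x+m+1)) y (fun w => matPow (bdB p) m x w)]
    rcases Nat.lt_or_ge y (x+m+1) with h | h
    · rw [if_pos (Finset.mem_range.2 h)]
    · rw [if_neg (fun hc => by simpa using Nat.lt_le_asymm (Finset.mem_range.1 hc) h),
        matPow_eq_zero p m x y (by omega)]
  | succ n ih =>
    intro x y
    have : m + (n + 1) = (m + n) + 1 := by ring
    rw [this, matPow_succ_eq, ih x (y+1), ih x (y-1), Finset.sum_mul, Finset.sum_mul,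
      ← Finset.sum_add_distrib]
    refine Finset.sum_congr rfl fun w _ => ?_
    rw [matPow_succ_eq p n w y]
    ring

/-- Truncated Dirichlet eigenvector for the birth-death chain. -/
noncomputable def phiAux (p : ℝ) (m : ℕ) : ℕ → ℝ := fun y =>
  if y ≤ m then Real.sqrt ((1-p)/p) ^ y * Real.sin (Real.pi/(m+1) * y) else 0

/-- The corresponding eigenvalue. -/
noncomputable def bdMu (p : ℝ) (m : ℕ) : ℝ :=
  2 * Real.sqrt (p * (1 - p)) * Real.cos (Real.pi/(m+1))

lemma sin_theta_nonneg (m y : ℕ) (hy : y ≤ m) : 0 ≤ Real.sin (Real.pi/(m+1) * y) := by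
  have hm1 : (0:ℝ) < m + 1 := by positivity
  apply Real.sin_nonneg_of_nonneg_of_le_pi
  · positivity
  · rw [div_mul_eq_mul_div, div_le_iff₀ hm1]
    have : (y:ℝ) ≤ m := by exact_mod_cast hy
    nlinarith [Real.pi_pos]

lemma phiAux_nonneg (p : ℝ) (hp0 : 0 < p) (hp1 : p < 1) (m y : ℕ) : 0 ≤ phiAux p m y := by
  unfold phiAux
  split_ifs with h
  · have := sin_theta_nonneg m y h
    positivity
  · exact le_refl 0
lemma phiAux_zero (p : ℝ) (m : ℕ) : phiAux p m 0 = 0 := by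
  simp [phiAux]

lemma bdMu_nonneg (p : ℝ) (hp0 : 0 < p) (hp1 : p < 1) (m : ℕ) (hm : 1 ≤ m) :
    0 ≤ bdMu p m := by
  unfold bdMu
  have hc : 0 ≤ Real.cos (Real.pi/(m+1)) := by
    apply Real.cos_nonneg_of_mem_Icc
    constructor
    · have : (0:ℝ) ≤ Real.pi/(m+1) := by positivity
      linarith [Real.pi_pos]
    · have h2 : (2:ℝ) ≤ m + 1 := by exact_mod_cast Nat.succ_le_succ hm
      exact div_le_div_of_nonneg_left Real.pi_pos.le (by norm_num) h2
  positivity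

/-- The eigen-inequality for the truncated eigenvector. -/
lemma phiAux_rec (p : ℝ) (hp0 : 0 < p) (hp1 : p < 1) (m : ℕ) (hm : 1 ≤ m)
    (y : ℕ) (hy : 1 ≤ y) :
    bdMu p m * phiAux p m y ≤ p * phiAux p m (y+1) + (1-p) * phiAux p m (y-1) := by
  have hq0 : (0:ℝ) < 1 - p := by linarith
  set θ := Real.pi/(m+1) with hθ
  set s := Real.sqrt ((1-p)/p) with hs
  have hs0 : 0 < s := Real.sqrt_pos.2 (div_pos hq0 hp0)
  have hsq : s^2 = (1-p)/p := Real.sq_sqrt (le_of_lt (div_pos hq0 hp0))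
  have hr0 : (0:ℝ) ≤ p * (1-p) := by positivity
  have hps : p * s = Real.sqrt (p*(1-p)) := by
    have h2 : (p*s)^2 = Real.sqrt (p*(1-p))^2 := by
      rw [mul_pow, hsq, Real.sq_sqrt hr0]; field_simp
    have := Real.sqrt_sq (by positivity : (0:ℝ) ≤ p * s)
    rw [← this, h2, Real.sqrt_sq (Real.sqrt_nonneg _)]
  have hqs : Real.sqrt (p*(1-p)) * s = 1 - p := by
    have h2 : (Real.sqrt (p*(1-p)) * s)^2 = (1-p)^2 := by
      rw [mul_pow, hsq, Real.sq_sqrt hr0]; field_simp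
    have := Real.sqrt_sq (by positivity : (0:ℝ) ≤ Real.sqrt (p*(1-p)) * s)
    rw [← this, h2, Real.sqrt_sq hq0.le]
  -- the untruncated eigen identity
  have psi_rec : p * (s^(y+1) * Real.sin (θ*(y+1))) + (1-p) * (s^(y-1) * Real.sin (θ*((y:ℝ)-1)))
      = bdMu p m * (s^y * Real.sin (θ*y)) := by
    have e1 : s^(y-1) * s = s^y := by rw [← pow_succ]; congr 1; omega
    have key : p * s^(y+1) = Real.sqrt (p*(1-p)) * s^y := by
      rw [pow_succ, show p*(s^y*s) = (p*s)*s^y from by ring, hps]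
    have key2 : (1-p) * s^(y-1) = Real.sqrt (p*(1-p)) * s^y := by
      linear_combination (-(s^(y-1))) * hqs + Real.sqrt (p*(1-p)) * e1
    have trig : Real.sin (θ*(y+1)) = Real.sin (θ*y) * Real.cos θ + Real.cos (θ*y) * Real.sin θ := by
      rw [show θ*((y:ℝ)+1) = θ*y + θ from by ring, Real.sin_add]
    have trig2 : Real.sin (θ*((y:ℝ)-1)) = Real.sin (θ*y) * Real.cos θ - Real.cos (θ*y) * Real.sin θ := by
      rw [show θ*((y:ℝ)-1) = θ*y - θ from by ring, Real.sin_sub]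
    push_cast
    rw [trig, trig2]
    unfold bdMu
    rw [← hθ]
    linear_combination (Real.sin (θ*y)*Real.cos θ + Real.cos (θ*y)*Real.sin θ) * key
      + (Real.sin (θ*y)*Real.cos θ - Real.cos (θ*y)*Real.sin θ) * key2
  rcases le_or_gt y m with hym | hym
  · have h1 : phiAux p m y = s^y * Real.sin (θ*y) := by
      unfold phiAux; rw [if_pos hym]
    have h3 : phiAux p m (y-1) = s^(y-1) * Real.sin (θ*((y:ℝ)-1)) := by
      unfold phiAux; rw [if_pos (by omega : y-1 ≤ m), Nat.cast_sub hy]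
      norm_num
      rfl
    have h2 : phiAux p m (y+1) = s^(y+1) * Real.sin (θ*((y:ℝ)+1)) := by
      unfold phiAux
      rcases le_or_gt (y+1) m with h | h
      · rw [if_pos h, ← hs, ← hθ, Nat.cast_add, Nat.cast_one]
      · have hym2 : y = m := by omega
        rw [if_neg (by omega)]
        have hpi : θ*((y:ℝ)+1) = Real.pi := by
          rw [hθ, hym2]
          have : ((m:ℝ)+1) ≠ 0 := by positivity
          field_simp
        rw [hpi, Real.sin_pi, mul_zero]
    rw [h1, h2, h3]
    have := psi_rec
    push_cast at this
    push_cast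
    linarith [this]
  · have h0 : phiAux p m y = 0 := by unfold phiAux; rw [if_neg (by omega)]
    rw [h0, mul_zero]
    exact add_nonneg (mul_nonneg hp0.le (phiAux_nonneg p hp0 hp1 m (y+1)))
      (mul_nonneg hq0.le (phiAux_nonneg p hp0 hp1 m (y-1)))

/-- Iterated eigen-inequality. -/
lemma matPow_phi_bound (p : ℝ) (hp0 : 0 < p) (hp1 : p < 1) (m : ℕ) (hm : 1 ≤ m) :
    ∀ n x, bdMu p m ^ n * phiAux p m x
      ≤ ∑ w ∈ Finset.range (x+n+1), matPow (bdB p) n x w * phiAux p m w := by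
  have hμ := bdMu_nonneg p hp0 hp1 m hm
  intro n
  induction n with
  | zero =>
    intro x
    simp only [pow_zero, one_mul, matPow, ite_mul, one_mul, zero_mul]
    rw [Finset.sum_ite_eq (Finset.range (x+0+1)) x (fun w => phiAux p m w),
      if_pos (Finset.mem_range.2 (by omega))]
  | succ n ih =>
    intro x
    rcases Nat.eq_zero_or_pos x with hx0 | hx0
    · subst hx0
      rw [phiAux_zero, mul_zero]
      exact Finset.sum_nonneg fun w _ => mul_nonneg (matPow_nonneg p hp0.le hp1.le _ _ _)
        (phiAux_nonneg p hp0 hp1 m w)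
    · have hbig : ∀ z, z + n + 1 ≤ x + n + 2 →
          (∑ w ∈ Finset.range (z+n+1), matPow (bdB p) n z w * phiAux p m w)
          = ∑ w ∈ Finset.range (x+n+2), matPow (bdB p) n z w * phiAux p m w := by
        intro z hz
        apply Finset.sum_subset (Finset.range_subset_range.2 hz)
        intro w _ hw
        rw [matPow_eq_zero p n z w (by simp only [Finset.mem_range] at hw; omega), zero_mul]
      have hsplit : (∑ w ∈ Finset.range (x+n+2), matPow (bdB p) (n+1) x w * phiAux p m w)
          = bdB p x (x+1) * (∑ w ∈ Finset.range (x+n+2), matPow (bdB p) n (x+1) w * phiAux p m w)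
          + bdB p x (x-1) * (∑ w ∈ Finset.range (x+n+2), matPow (bdB p) n (x-1) w * phiAux p m w) := by
        rw [Finset.mul_sum, Finset.mul_sum, ← Finset.sum_add_distrib]
        refine Finset.sum_congr rfl fun w _ => ?_
        rw [matPow_succ_eq' p n x w]; ring
      have hB1 : bdB p x (x+1) = p := by unfold bdB; split_ifs <;> first | omega | rfl
      have hA : p * (bdMu p m ^ n * phiAux p m (x+1))
          ≤ bdB p x (x+1) * (∑ w ∈ Finset.range (x+n+2), matPow (bdB p) n (x+1) w * phiAux p m w) := by
        rw [hB1]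
        exact mul_le_mul_of_nonneg_left ((ih (x+1)).trans_eq (hbig (x+1) (by omega))) hp0.le
      have hB0 : (1-p) * (bdMu p m ^ n * phiAux p m (x-1))
          ≤ bdB p x (x-1) * (∑ w ∈ Finset.range (x+n+2), matPow (bdB p) n (x-1) w * phiAux p m w) := by
        rcases Nat.lt_or_ge x 2 with hx2 | hx2
        · have hx1 : x = 1 := by omega
          subst hx1
          have hb : bdB p 1 0 = 0 := by norm_num [bdB]
          rw [hb, zero_mul]
          simp [phiAux_zero]
        · have : bdB p x (x-1) = 1 - p := by unfold bdB; split_ifs <;> first | omega | rfl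
          rw [this]
          exact mul_le_mul_of_nonneg_left ((ih (x-1)).trans_eq (hbig (x-1) (by omega)))
            (by linarith)
      have hgoal : x + (n+1) + 1 = x + n + 2 := by omega
      rw [hgoal]
      calc bdMu p m ^ (n+1) * phiAux p m x
          = bdMu p m ^ n * (bdMu p m * phiAux p m x) := by ring
        _ ≤ bdMu p m ^ n * (p * phiAux p m (x+1) + (1-p) * phiAux p m (x-1)) :=
            mul_le_mul_of_nonneg_left (phiAux_rec p hp0 hp1 m hm x hx0) (pow_nonneg hμ n)
        _ = p * (bdMu p m ^ n * phiAux p m (x+1)) + (1-p) * (bdMu p m ^ n * phiAux p m (x-1)) := by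
            ring
        _ ≤ _ := by rw [hsplit]; exact add_le_add hA hB0

/-- The main diagonal lower bound via Cauchy–Schwarz. -/
lemma diag_lower_bound (p : ℝ) (hp0 : 0 < p) (hp1 : p < 1) (m x n : ℕ)
    (hx : 1 ≤ x) (hxm : x ≤ m) :
    bdMu p m ^ (2*n) * Real.sin (Real.pi/(m+1) * x)^2
      ≤ ((x:ℝ)+n+1) * matPow (bdB p) (2*n) x x := by
  have hm : 1 ≤ m := le_trans hx hxm
  have hq0 : (0:ℝ) < 1 - p := by linarith
  have hμ := bdMu_nonneg p hp0 hp1 m hm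
  set θ := Real.pi/(m+1) with hθ
  set s := Real.sqrt ((1-p)/p) with hs
  have hsq : s^2 = (1-p)/p := Real.sq_sqrt (le_of_lt (div_pos hq0 hp0))
  set g : ℕ → ℝ := fun w => if w ≤ m then Real.sin (θ*w) else 0 with hg
  set f : ℕ → ℝ := fun w => matPow (bdB p) n x w * s^w with hf
  have hφ : ∀ w, phiAux p m w = s^w * g w := by
    intro w
    unfold phiAux
    rw [hg]
    simp only
    split_ifs with h
    · rw [← hθ, ← hs]
    · rw [mul_zero]
  have hone : ((p/(1-p))^x : ℝ) * ((1-p)/p)^x = 1 := by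
    rw [← mul_pow, show (p/(1-p)) * ((1-p)/p) = 1 from by field_simp, one_pow]
  -- step 1: the eigen bound, rewritten
  have h1 : bdMu p m ^ n * phiAux p m x ≤ ∑ w ∈ Finset.range (x+n+1), f w * g w := by
    refine (matPow_phi_bound p hp0 hp1 m hm n x).trans_eq ?_
    refine Finset.sum_congr rfl fun w _ => ?_
    rw [hφ w, hf]; ring
  have h2 : 0 ≤ bdMu p m ^ n * phiAux p m x :=
    mul_nonneg (pow_nonneg hμ n) (phiAux_nonneg p hp0 hp1 m x)
  have hCS := Finset.sum_mul_sq_le_sq_mul_sq (Finset.range (x+n+1)) f g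
  have hgs : (∑ w ∈ Finset.range (x+n+1), g w ^ 2) ≤ ((x:ℝ)+n+1) := by
    have hb : ∀ w ∈ Finset.range (x+n+1), g w ^ 2 ≤ 1 := by
      intro w _
      rw [hg]
      simp only
      split_ifs with h
      · exact Real.sin_sq_le_one _
      · norm_num
    calc (∑ w ∈ Finset.range (x+n+1), g w ^ 2)
        ≤ ∑ w ∈ Finset.range (x+n+1), (1:ℝ) := Finset.sum_le_sum hb
      _ = ((x:ℝ)+n+1) := by rw [Finset.sum_const, Finset.card_range]; push_cast; ring
  have hfs : 0 ≤ ∑ w ∈ Finset.range (x+n+1), f w ^ 2 :=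
    Finset.sum_nonneg fun w _ => sq_nonneg _
  -- step 2: diagonal as weighted square sum
  have hdiag : matPow (bdB p) (2*n) x x
      = (p/(1-p))^x * ∑ w ∈ Finset.range (x+n+1), f w ^ 2 := by
    rw [two_mul, matPow_add p n n x x, Finset.mul_sum]
    refine Finset.sum_congr rfl fun w _ => ?_
    have hrev := matPow_rev p hp1 n w x
    have honew : ((1-p)/p)^w * (p/(1-p))^w = (1:ℝ) := by
      rw [← mul_pow, show ((1-p)/p) * (p/(1-p)) = 1 from by field_simp, one_pow]
    have hsw : (s^w)^2 = ((1-p)/p)^w := by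
      rw [← pow_mul, mul_comm w 2, pow_mul, hsq]
    rw [hf]
    simp only
    rw [mul_pow, hsw]
    linear_combination (matPow (bdB p) n x w * ((1-p)/p)^w) * hrev
      - (matPow (bdB p) n x w * matPow (bdB p) n w x) * honew
  -- step 3: opening up the left-hand side
  have hφx : phiAux p m x = s^x * Real.sin (θ*x) := by
    unfold phiAux; rw [if_pos hxm, ← hs, ← hθ]
  have hsx : (s^x)^2 = ((1-p)/p)^x := by
    rw [← pow_mul, mul_comm x 2, pow_mul, hsq]
  have hstart : bdMu p m ^ (2*n) * Real.sin (θ*x)^2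
      = (p/(1-p))^x * (bdMu p m ^ n * phiAux p m x)^2 := by
    rw [hφx, show (bdMu p m ^ n * (s^x * Real.sin (θ*x)))^2
      = (bdMu p m ^ n)^2 * (s^x)^2 * Real.sin (θ*x)^2 from by ring, hsx]
    linear_combination (-((bdMu p m ^ n)^2 * Real.sin (θ*x)^2)) * hone
  calc bdMu p m ^ (2*n) * Real.sin (θ*x)^2
      = (p/(1-p))^x * (bdMu p m ^ n * phiAux p m x)^2 := hstart
    _ ≤ (p/(1-p))^x * (∑ w ∈ Finset.range (x+n+1), f w * g w)^2 := by
        apply mul_le_mul_of_nonneg_left (pow_le_pow_left₀ h2 h1 2) (by positivity)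
    _ ≤ (p/(1-p))^x * ((∑ w ∈ Finset.range (x+n+1), f w ^ 2)
          * ∑ w ∈ Finset.range (x+n+1), g w ^ 2) := by
        apply mul_le_mul_of_nonneg_left hCS (by positivity)
    _ ≤ (p/(1-p))^x * ((∑ w ∈ Finset.range (x+n+1), f w ^ 2) * ((x:ℝ)+n+1)) := by
        apply mul_le_mul_of_nonneg_left (mul_le_mul_of_nonneg_left hgs hfs) (by positivity)
    _ = ((x:ℝ)+n+1) * matPow (bdB p) (2*n) x x := by rw [hdiag]; ring

/-- For every `0 < λ < 2√(pq)` and every state `x ≥ 1`, the series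
`∑_n λ^{-n} B^n(x,x)` diverges to infinity. -/
theorem stmt3 (p : ℝ) (hp0 : 0 < p) (hp1 : p < 1) (lam : ℝ)
    (hlam0 : 0 < lam) (hlam : lam < 2 * Real.sqrt (p * (1 - p)))
    (x : ℕ) (hx : 1 ≤ x) :
    Tendsto (fun N : ℕ => ∑ n ∈ Finset.range N, lam⁻¹ ^ n * matPow (bdB p) n x x)
      atTop atTop := by
  have hpq : (0:ℝ) < p * (1-p) := by nlinarith
  have hsq0 : 0 < Real.sqrt (p*(1-p)) := Real.sqrt_pos.2 hpq
  have hc0 : lam / (2*Real.sqrt (p*(1-p))) < 1 := (div_lt_one (by positivity)).2 hlam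
  -- choose m with x ≤ m and cos(π/(m+1)) > lam/(2√(pq))
  have ht0 : Tendsto (fun k : ℕ => Real.pi/(k+1)) atTop (nhds 0) := by
    have h := tendsto_one_div_add_atTop_nhds_zero_nat.const_mul Real.pi
    simpa [div_eq_mul_inv, mul_comm] using h
  have htcos : Tendsto (fun k : ℕ => Real.cos (Real.pi/(k+1))) atTop (nhds 1) := by
    have h := (Real.continuous_cos.tendsto 0).comp ht0
    simpa [Function.comp_def] using h
  obtain ⟨m, hm1, hm2⟩ : ∃ m : ℕ, x ≤ m ∧
      lam / (2*Real.sqrt (p*(1-p))) < Real.cos (Real.pi/(m+1)) :=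
    ((eventually_ge_atTop x).and (htcos.eventually (eventually_gt_nhds hc0))).exists
  have hmulam : lam < bdMu p m := by
    have := (div_lt_iff₀ (by positivity : (0:ℝ) < 2*Real.sqrt (p*(1-p)))).1 hm2
    unfold bdMu
    linarith
  set σ := bdMu p m / lam with hσdef
  have hσ1 : 1 < σ := (one_lt_div hlam0).2 hmulam
  have hσ0 : (0:ℝ) < σ := by linarith
  set c := Real.sin (Real.pi/(m+1) * x)^2 with hcdef
  have hc : 0 < c := by
    have hx0 : (0:ℝ) < (x:ℝ) := by exact_mod_cast hx
    have hxm : (x:ℝ) < (m:ℝ)+1 := by exact_mod_cast Nat.lt_succ_of_le hm1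
    have hθ0 : (0:ℝ) < Real.pi/(m+1) := by positivity
    have hlt : Real.pi/(m+1) * x < Real.pi := by
      calc Real.pi/(m+1) * x < Real.pi/(m+1) * ((m:ℝ)+1) :=
            mul_lt_mul_of_pos_left hxm hθ0
        _ = Real.pi := div_mul_cancel₀ _ (by positivity)
    exact pow_pos (Real.sin_pos_of_pos_of_lt_pi (by positivity) hlt) 2
  set δ := σ - 1 with hδdef
  have hδ : 0 < δ := by simp [hδdef]; linarith
  set c₂ := min δ (1/((x:ℝ)+1)) with hc₂def
  have hc₂ : 0 < c₂ := lt_min hδ (by positivity)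
  have hlam' : (0:ℝ) < lam⁻¹ := inv_pos.2 hlam0
  -- the key term bound
  have hmain : ∀ n : ℕ, c * c₂ * σ^n ≤ lam⁻¹^(2*n) * matPow (bdB p) (2*n) x x := by
    intro n
    have hpos : (0:ℝ) < (x:ℝ)+(n:ℝ)+1 := by positivity
    have hn1 : c₂ * ((x:ℝ)+n+1) ≤ σ^n := by
      have hb : (1:ℝ) + n * δ ≤ σ^n := by
        have h := one_add_mul_le_pow (by linarith : (-2:ℝ) ≤ δ) n
        rw [show (1:ℝ)+δ = σ from by rw [hδdef]; ring] at h
        exact h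
      have h1 : c₂ ≤ 1/((x:ℝ)+1) := min_le_right _ _
      have h2 : c₂ ≤ δ := min_le_left _ _
      have hx1 : (0:ℝ) < (x:ℝ)+1 := by positivity
      have e1 : c₂ * ((x:ℝ)+1) ≤ 1 := by
        calc c₂ * ((x:ℝ)+1) ≤ (1/((x:ℝ)+1)) * ((x:ℝ)+1) :=
              mul_le_mul_of_nonneg_right h1 hx1.le
          _ = 1 := by field_simp
      have e2 : c₂ * n ≤ δ * n := mul_le_mul_of_nonneg_right h2 (Nat.cast_nonneg n)
      calc c₂ * ((x:ℝ)+n+1) = c₂*((x:ℝ)+1) + c₂*n := by ring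
        _ ≤ 1 + δ*n := add_le_add e1 e2
        _ = 1 + n*δ := by ring
        _ ≤ σ^n := hb
    have hd := diag_lower_bound p hp0 hp1 m x n hx hm1
    have hdd : bdMu p m^(2*n) * c / ((x:ℝ)+n+1) ≤ matPow (bdB p) (2*n) x x :=
      (div_le_iff₀ hpos).2 (le_of_le_of_eq hd (mul_comm _ _))
    have step1 : c * c₂ * σ^n * ((x:ℝ)+n+1) ≤ c * σ^n * σ^n := by
      have h := mul_le_mul_of_nonneg_left hn1 (mul_nonneg hc.le (pow_nonneg hσ0.le n))
      calc c*c₂*σ^n*((x:ℝ)+n+1) = (c*σ^n) * (c₂*((x:ℝ)+n+1)) := by ring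
        _ ≤ (c*σ^n) * σ^n := h
        _ = c*σ^n*σ^n := by ring
    have hσpow : σ^n * σ^n = lam⁻¹^(2*n) * bdMu p m^(2*n) := by
      rw [← pow_add, ← two_mul, hσdef, div_pow, div_eq_mul_inv, ← inv_pow]
      ring
    calc c*c₂*σ^n ≤ c*σ^n*σ^n/((x:ℝ)+n+1) := (le_div_iff₀ hpos).2 step1
      _ = lam⁻¹^(2*n) * (bdMu p m^(2*n) * c/((x:ℝ)+n+1)) := by
          rw [show c*σ^n*σ^n = c*(σ^n*σ^n) from by ring, hσpow]; ring
      _ ≤ lam⁻¹^(2*n) * matPow (bdB p) (2*n) x x :=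
          mul_le_mul_of_nonneg_left hdd (pow_nonneg hlam'.le _)
  have htend : Tendsto (fun n : ℕ => c*c₂*σ^n) atTop atTop :=
    (tendsto_pow_atTop_atTop_of_one_lt hσ1).const_mul_atTop (by positivity)
  rw [tendsto_atTop_atTop]
  intro b
  obtain ⟨n, hn⟩ := (htend.eventually_ge_atTop b).exists
  refine ⟨2*n+1, fun N hN => ?_⟩
  have hterm : b ≤ lam⁻¹^(2*n) * matPow (bdB p) (2*n) x x := hn.trans (hmain n)
  have hsingle : lam⁻¹^(2*n) * matPow (bdB p) (2*n) x x
      ≤ ∑ k ∈ Finset.range N, lam⁻¹^k * matPow (bdB p) k x x :=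
    Finset.single_le_sum
      (fun k _ => mul_nonneg (pow_nonneg hlam'.le k) (matPow_nonneg p hp0.le hp1.le k x x))
      (Finset.mem_range.2 (by omega))
  exact hterm.trans hsingle
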